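/- Let (p,Q) be a block-model parameter pair on k communities with Q i j ≥ 0 for all i,j, and let D ≥ 1 be a natural number. Then for every connected finite simple graph H with 1 ≤ |E(H)| ≤ D, Ψ_{p,Q}(H) ≤ max_{1 ≤ t ≤ D} Ψ_{p,Q}(Star_t). -/

import Mathlib

set_option linter.unusedVariables false

open Finset

open Finset

/-- The Fourier coefficient Φ_{p,Q}(H) of a finite simple graph `H`. -/
noncomputable def Phi {k : ℕ} (p : Fin k → ℝ) (Q : Fin k → Fin k → ℝ)
    (hQ : ∀ i j, Q i j = Q j i) {V : Type} [Fintype V] [DecidableEq V]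
    (H : SimpleGraph V) [DecidableRel H.Adj] : ℝ :=
  ∑ x : V → Fin k, (∏ v, p (x v)) *
    ∏ e ∈ H.edgeFinset,
      Sym2.lift ⟨fun u v => Q (x u) (x v), fun u v => hQ (x u) (x v)⟩ e

/-- The partition value Ψ_{p,Q}(H) = |Φ_{p,Q}(H)|^{1/|V(H)|}. -/
noncomputable def Psi {k : ℕ} (p : Fin k → ℝ) (Q : Fin k → Fin k → ℝ)
    (hQ : ∀ i j, Q i j = Q j i) {V : Type} [Fintype V] [DecidableEq V]
    (H : SimpleGraph V) [DecidableRel H.Adj] : ℝ :=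
  |Phi p Q hQ H| ^ ((Fintype.card V : ℝ)⁻¹)

/-- The star graph with one center (vertex 0) joined to `t` leaves. -/
def StarGraph (t : ℕ) : SimpleGraph (Fin (t + 1)) where
  Adj u v := u ≠ v ∧ (u = 0 ∨ v = 0)
  symm := ⟨fun u v h => ⟨h.1.symm, h.2.symm⟩⟩
  loopless := ⟨fun u h => h.1 rfl⟩

instance (t : ℕ) : DecidableRel (StarGraph t).Adj :=
  fun u v => inferInstanceAs (Decidable (u ≠ v ∧ (u = 0 ∨ v = 0)))

/-- The cycle graph on 4 vertices. -/
def Cyc4 : SimpleGraph (Fin 4) where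
  Adj u v := u ≠ v ∧ ((u.val + 1) % 4 = v.val ∨ (v.val + 1) % 4 = u.val)
  symm := ⟨fun u v h => ⟨h.1.symm, h.2.symm⟩⟩
  loopless := ⟨fun u h => h.1 rfl⟩

instance : DecidableRel Cyc4.Adj :=
  fun u v => inferInstanceAs
    (Decidable (u ≠ v ∧ ((u.val + 1) % 4 = v.val ∨ (v.val + 1) % 4 = u.val)))


set_option linter.unusedSectionVars false

namespace SBMAux

open Function

variable {k : ℕ} (p : Fin k → ℝ) (Q : Fin k → Fin k → ℝ)

noncomputable def qd (i : Fin k) : ℝ := ∑ j, p j * Q i j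

lemma qd_nonneg (hp : ∀ i, 0 ≤ p i) (hQnn : ∀ i j, 0 ≤ Q i j) (i : Fin k) :
    0 ≤ qd p Q i :=
  Finset.sum_nonneg fun j _ => mul_nonneg (hp j) (hQnn i j)

lemma qd_le_one (hp : ∀ i, 0 ≤ p i) (hpsum : ∑ i, p i = 1)
    (hQbd : ∀ i j, |Q i j| ≤ 1) (i : Fin k) : qd p Q i ≤ 1 := by
  have : qd p Q i ≤ ∑ j, p j := by
    apply Finset.sum_le_sum
    intro j _
    have := (abs_le.mp (hQbd i j)).2
    nlinarith [hp j]
  simpa [hpsum] using this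

variable {ι : Type} [Fintype ι] [DecidableEq ι]

inductive IsTree : Finset ι → List (ι × ι) → Prop
  | single (v : ι) : IsTree {v} []
  | hang (s : Finset ι) (E : List (ι × ι)) (u w : ι) (hw : w ∈ s) (hu : u ∉ s)
      (ht : IsTree s E) : IsTree (insert u s) ((u, w) :: E)

lemma IsTree.nonempty {s : Finset ι} {E : List (ι × ι)} (h : IsTree s E) : s.Nonempty := by
  induction h with
  | single v => exact ⟨v, by simp⟩
  | hang s E u w hw hu ht ih => exact ⟨u, by simp⟩

lemma IsTree.mem_of {s : Finset ι} {E : List (ι × ι)} (h : IsTree s E) :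
    ∀ e ∈ E, e.1 ∈ s ∧ e.2 ∈ s := by
  induction h with
  | single v => simp
  | hang s E u w hw hu ht ih =>
    intro e he
    rcases List.mem_cons.mp he with rfl | he
    · exact ⟨by simp, by simp [hw]⟩
    · exact ⟨Finset.mem_insert_of_mem (ih e he).1, Finset.mem_insert_of_mem (ih e he).2⟩

lemma IsTree.length_eq {s : Finset ι} {E : List (ι × ι)} (h : IsTree s E) :
    E.length + 1 = s.card := by
  induction h with
  | single v => simp
  | hang s E u w hw hu ht ih => simp [Finset.card_insert_of_notMem hu, ← ih]

lemma IsTree.nodup_sym {s : Finset ι} {E : List (ι × ι)} (h : IsTree s E) :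
    (E.map fun e => Sym2.mk e.1 e.2).Nodup := by
  induction h with
  | single v => simp
  | hang s E u w hw hu ht ih =>
    simp only [List.map_cons, List.nodup_cons]
    refine ⟨?_, ih⟩
    intro hmem
    rcases List.mem_map.mp hmem with ⟨e, he, heq⟩
    have hes := ht.mem_of e he
    have : (u, w) = e ∨ (u, w) = Prod.swap e := by
      rw [← Sym2.mk_eq_mk_iff]; exact heq.symm
    rcases this with h1 | h1
    · have : u = e.1 := congrArg Prod.fst h1
      exact hu (this ▸ hes.1)
    · have : u = e.2 := congrArg Prod.fst h1
      exact hu (this ▸ hes.2)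

noncomputable def eP (x : ι → Fin k) (E : List (ι × ι)) : ℝ :=
  (E.map fun e => Q (x e.1) (x e.2)).prod

noncomputable def Wt (E : List (ι × ι)) (a : ι → ℕ) : ℝ :=
  ∑ x : ι → Fin k, (∏ v, p (x v)) * (∏ v, qd p Q (x v) ^ a v) * eP Q x E

lemma eP_nil (x : ι → Fin k) : eP Q x [] = 1 := by simp [eP]

lemma eP_cons (x : ι → Fin k) (e : ι × ι) (E : List (ι × ι)) :
    eP Q x (e :: E) = Q (x e.1) (x e.2) * eP Q x E := by simp [eP]

lemma eP_nonneg (hQnn : ∀ i j, 0 ≤ Q i j) (x : ι → Fin k) (E : List (ι × ι)) :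
    0 ≤ eP Q x E := by
  induction E with
  | nil => simp [eP]
  | cons e E ih => rw [eP_cons]; exact mul_nonneg (hQnn _ _) ih

lemma eP_update (x : ι → Fin k) (u : ι) (j : Fin k) (E : List (ι × ι))
    (hE : ∀ e ∈ E, e.1 ≠ u ∧ e.2 ≠ u) :
    eP Q (Function.update x u j) E = eP Q x E := by
  induction E with
  | nil => simp [eP]
  | cons e E ih =>
    rw [eP_cons, eP_cons, Function.update_of_ne (hE e (by simp)).1,
      Function.update_of_ne (hE e (by simp)).2, ih (fun e he => hE e (by simp [he]))]

/-- From any tree with at least two vertices one can remove a leaf `u` distinct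
from a prescribed vertex `v₀`. -/
lemma IsTree.exists_peel (hQ : ∀ i j, Q i j = Q j i) {s : Finset ι} {E : List (ι × ι)}
    (h : IsTree s E) (hcard : 2 ≤ s.card) (v₀ : ι) :
    ∃ (u w : ι) (E' : List (ι × ι)), u ∈ s ∧ u ≠ v₀ ∧ w ∈ s ∧ w ≠ u ∧
      IsTree (s.erase u) E' ∧ (∀ e ∈ E', e.1 ≠ u ∧ e.2 ≠ u) ∧
      ∀ x : ι → Fin k, eP Q x E = Q (x u) (x w) * eP Q x E' := by
  induction h generalizing v₀ with
  | single v => simp at hcard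
  | hang s E u₀ w₀ hw₀ hu₀ ht ih =>
    by_cases hv : v₀ = u₀
    · -- must find a leaf inside s
      rcases Nat.lt_or_ge s.card 2 with hs1 | hs2
      · -- s is a singleton {w₀}
        have hcard1 : s.card = 1 := le_antisymm (by omega) (Finset.card_pos.mpr ht.nonempty)
        have hE : E = [] := by
          have := ht.length_eq
          rw [hcard1] at this
          exact List.length_eq_zero_iff.mp (by omega)
        have hsw : s = {w₀} := by
          rcases Finset.card_eq_one.mp hcard1 with ⟨a, rfl⟩
          simp only [Finset.mem_singleton] at hw₀; rw [hw₀]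
        have hwu : w₀ ≠ u₀ := fun h' => hu₀ (h' ▸ hw₀)
        have herase : (insert u₀ s).erase w₀ = {u₀} := by
          rw [hsw]; ext z
          simp only [Finset.mem_erase, Finset.mem_insert, Finset.mem_singleton]
          constructor
          · rintro ⟨h1, h2 | h3⟩
            exacts [h2, absurd h3 h1]
          · rintro rfl; exact ⟨fun h => hwu h.symm, Or.inl rfl⟩
        refine ⟨w₀, u₀, [], Finset.mem_insert_of_mem hw₀, by rw [hv]; exact hwu,
          Finset.mem_insert_self _ _, Ne.symm hwu, ?_, by simp, ?_⟩
        · rw [herase]; exact IsTree.single u₀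
        · intro x
          simp only [hE, eP_cons, eP_nil, mul_one]
          exact hQ _ _
      · -- use the IH on s with forbidden vertex w₀
        rcases ih hs2 w₀ with ⟨u, w, E₁, hus, huw₀, hws, hwu, ht', hE₁, hfac⟩
        have huu₀ : u ≠ u₀ := fun h' => hu₀ (h' ▸ hus)
        refine ⟨u, w, (u₀, w₀) :: E₁, Finset.mem_insert_of_mem hus, ?_, Finset.mem_insert_of_mem hws,
          hwu, ?_, ?_, ?_⟩
        · rw [hv]; exact huu₀
        · have herase : (insert u₀ s).erase u = insert u₀ (s.erase u) := by
            rw [Finset.erase_insert_of_ne huu₀.symm]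
          rw [herase]
          exact IsTree.hang _ _ u₀ w₀ (Finset.mem_erase.mpr ⟨Ne.symm huw₀, hw₀⟩)
            (fun hc => hu₀ (Finset.mem_of_mem_erase hc)) ht'
        · intro e he
          rcases List.mem_cons.mp he with rfl | he
          · exact ⟨huu₀.symm, Ne.symm huw₀⟩
          · exact hE₁ e he
        · intro x
          rw [eP_cons, hfac x, eP_cons]; ring
    · -- u₀ itself is the leaf
      have hwu : w₀ ≠ u₀ := fun h' => hu₀ (h' ▸ hw₀)
      refine ⟨u₀, w₀, E, Finset.mem_insert_self _ _, fun h => hv h.symm,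
        Finset.mem_insert_of_mem hw₀, hwu, ?_, ?_, ?_⟩
      · rw [Finset.erase_insert hu₀]; exact ht
      · intro e he
        have := ht.mem_of e he
        exact ⟨fun h' => hu₀ (h' ▸ this.1), fun h' => hu₀ (h' ▸ this.2)⟩
      · intro x; rw [eP_cons]

lemma erase_comm' (s : Finset ι) (a b : ι) : (s.erase a).erase b = (s.erase b).erase a := by
  ext z
  simp only [Finset.mem_erase]
  tauto

lemma sum_split (s : Finset ι) (f : ι → ℕ) {w : ι} (hw : w ∈ s) :
    f w + ∑ v ∈ s \ {w}, f v = ∑ v ∈ s, f v := by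
  rw [← Finset.erase_eq]
  exact Finset.add_sum_erase _ _ hw

lemma amgm2 (A B : ℝ) (hA : 0 ≤ A) (hB : 0 ≤ B) (m n : ℕ) :
    ((m : ℝ) + n) * (A ^ m * B ^ n) ≤ m * A ^ (m + n) + n * B ^ (m + n) := by
  rcases Nat.eq_zero_or_pos (m + n) with h0 | hpos
  · obtain ⟨rfl, rfl⟩ := Nat.add_eq_zero.mp h0
    simp
  · have hs : (0:ℝ) < (m:ℝ) + n := by
      have : 0 < ((m + n : ℕ) : ℝ) := Nat.cast_pos.mpr hpos
      push_cast at this; linarith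
    have hw : (m:ℝ)/((m:ℝ)+n) + (n:ℝ)/((m:ℝ)+n) = 1 := by field_simp
    have key := Real.geom_mean_le_arith_mean2_weighted
      (div_nonneg (Nat.cast_nonneg m) hs.le) (div_nonneg (Nat.cast_nonneg n) hs.le)
      (pow_nonneg hA (m+n)) (pow_nonneg hB (m+n)) hw
    have e1 : (A ^ (m+n)) ^ ((m:ℝ)/((m:ℝ)+n)) = A ^ m := by
      rw [← Real.rpow_natCast A (m+n), ← Real.rpow_natCast A m, ← Real.rpow_mul hA]
      congr 1
      push_cast
      field_simp
    have e2 : (B ^ (m+n)) ^ ((n:ℝ)/((m:ℝ)+n)) = B ^ n := by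
      rw [← Real.rpow_natCast B (m+n), ← Real.rpow_natCast B n, ← Real.rpow_mul hB]
      congr 1
      push_cast
      field_simp
    rw [e1, e2] at key
    have hfin : ((m:ℝ)+n) * ((m:ℝ)/((m:ℝ)+n) * A^(m+n) + (n:ℝ)/((m:ℝ)+n) * B^(m+n))
        = m * A^(m+n) + n * B^(m+n) := by
      field_simp <;> ring
    have := mul_le_mul_of_nonneg_left key hs.le
    rw [hfin] at this
    push_cast
    push_cast at this
    linarith

lemma peel_sum (hk : 0 < k) (u w : ι) (hw : w ≠ u) (A B : Fin k → Fin k → ℝ)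
    (hAB : ∀ t, ∑ j, A j t = ∑ j, B j t)
    (G : (ι → Fin k) → ℝ) (hG : ∀ x j, G (Function.update x u j) = G x) :
    ∑ x : ι → Fin k, A (x u) (x w) * G x = ∑ x : ι → Fin k, B (x u) (x w) * G x := by
  classical
  set e := Equiv.funSplitAt u (Fin k) with he
  have h1 : ∀ (y : Fin k) (z : { j // j ≠ u } → Fin k), (e.symm (y, z)) u = y := by
    intro y z
    exact congrArg Prod.fst (e.apply_symm_apply (y, z))
  have h2 : ∀ (y : Fin k) (z : { j // j ≠ u } → Fin k) (j : ι) (hj : j ≠ u),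
      (e.symm (y, z)) j = z ⟨j, hj⟩ := by
    intro y z j hj
    exact congrFun (congrArg Prod.snd (e.apply_symm_apply (y, z))) ⟨j, hj⟩
  have h3 : ∀ (y : Fin k) (z : { j // j ≠ u } → Fin k),
      G (e.symm (y, z)) = G (e.symm (⟨0, hk⟩, z)) := by
    intro y z
    have hupd : e.symm (y, z) = Function.update (e.symm (⟨0, hk⟩, z)) u y := by
      funext j
      by_cases hj : j = u
      · subst hj; rw [Function.update_self, h1]
      · rw [Function.update_of_ne hj, h2 _ _ j hj, h2 _ _ j hj]
    rw [hupd, hG]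
  have main : ∀ C : Fin k → Fin k → ℝ,
      ∑ x : ι → Fin k, C (x u) (x w) * G x
        = ∑ z : { j // j ≠ u } → Fin k, (∑ y, C y (z ⟨w, hw⟩)) * G (e.symm (⟨0, hk⟩, z)) := by
    intro C
    rw [← Equiv.sum_comp e.symm (fun x => C (x u) (x w) * G x), Fintype.sum_prod_type]
    rw [Finset.sum_comm]
    apply Finset.sum_congr rfl
    intro z _
    rw [Finset.sum_mul]
    apply Finset.sum_congr rfl
    intro y _
    rw [h1, h2 _ _ w hw, h3]
  rw [main A, main B]
  apply Finset.sum_congr rfl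
  intro z _
  rw [hAB]

lemma Wt_peel (hk : 0 < k) (hpsum : ∑ i, p i = 1) (hQ : ∀ i j, Q i j = Q j i)
    (u w : ι) (hwu : w ≠ u) (E' : List (ι × ι))
    (hE' : ∀ e ∈ E', e.1 ≠ u ∧ e.2 ≠ u) (a : ι → ℕ) (hau : a u = 0) :
    ∑ x : ι → Fin k, (∏ v, p (x v)) * (∏ v, qd p Q (x v) ^ a v) * (Q (x u) (x w) * eP Q x E')
      = Wt p Q E' (Function.update a w (a w + 1)) := by
  classical
  set G : (ι → Fin k) → ℝ := fun x =>
    (∏ v ∈ Finset.univ.erase u, p (x v)) * (∏ v ∈ Finset.univ.erase u, qd p Q (x v) ^ a v)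
      * eP Q x E' with hGdef
  have hG : ∀ x j, G (Function.update x u j) = G x := by
    intro x j
    simp only [hGdef]
    rw [eP_update Q x u j E' hE']
    congr 2
    · exact Finset.prod_congr rfl fun v hv => by
        rw [Function.update_of_ne (Finset.mem_erase.mp hv).1]
    · exact Finset.prod_congr rfl fun v hv => by
        rw [Function.update_of_ne (Finset.mem_erase.mp hv).1]
  have lhs_eq : ∀ x : ι → Fin k,
      (∏ v, p (x v)) * (∏ v, qd p Q (x v) ^ a v) * (Q (x u) (x w) * eP Q x E')
        = (p (x u) * Q (x u) (x w)) * G x := by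
    intro x
    rw [hGdef]
    rw [← Finset.mul_prod_erase Finset.univ (fun v => p (x v)) (Finset.mem_univ u),
        ← Finset.mul_prod_erase Finset.univ (fun v => qd p Q (x v) ^ a v) (Finset.mem_univ u),
        hau, pow_zero]
    ring
  have hwmem : w ∈ Finset.univ.erase u := Finset.mem_erase.mpr ⟨hwu, Finset.mem_univ w⟩
  have humem : u ∈ Finset.univ.erase w := Finset.mem_erase.mpr ⟨Ne.symm hwu, Finset.mem_univ u⟩
  have rhs_eq : ∀ x : ι → Fin k,
      (∏ v, p (x v)) * (∏ v, qd p Q (x v) ^ (Function.update a w (a w + 1)) v) * eP Q x E'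
        = (p (x u) * qd p Q (x w)) * G x := by
    intro x
    simp only [hGdef]
    have hm1 : (∏ v, qd p Q (x v) ^ (Function.update a w (a w + 1)) v)
        = qd p Q (x w) ^ (a w + 1) * ∏ v ∈ Finset.univ.erase w, qd p Q (x v) ^ a v := by
      rw [← Finset.mul_prod_erase Finset.univ
        (fun v => qd p Q (x v) ^ (Function.update a w (a w + 1)) v) (Finset.mem_univ w)]
      rw [Function.update_self]
      congr 1
      exact Finset.prod_congr rfl fun v hv => by
        rw [Function.update_of_ne (Finset.mem_erase.mp hv).1]
    have hm2 : ∏ v ∈ Finset.univ.erase u, qd p Q (x v) ^ a v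
        = qd p Q (x w) ^ a w * ∏ v ∈ (Finset.univ.erase u).erase w, qd p Q (x v) ^ a v :=
      (Finset.mul_prod_erase _ _ hwmem).symm
    have hm3 : ∏ v ∈ Finset.univ.erase w, qd p Q (x v) ^ a v
        = ∏ v ∈ (Finset.univ.erase u).erase w, qd p Q (x v) ^ a v := by
      calc ∏ v ∈ Finset.univ.erase w, qd p Q (x v) ^ a v
          = qd p Q (x u) ^ a u * ∏ v ∈ (Finset.univ.erase w).erase u, qd p Q (x v) ^ a v :=
            (Finset.mul_prod_erase _ _ humem).symm
        _ = ∏ v ∈ (Finset.univ.erase w).erase u, qd p Q (x v) ^ a v := by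
            rw [hau, pow_zero, one_mul]
        _ = ∏ v ∈ (Finset.univ.erase u).erase w, qd p Q (x v) ^ a v := by
            rw [erase_comm' Finset.univ w u]
    rw [← Finset.mul_prod_erase Finset.univ (fun v => p (x v)) (Finset.mem_univ u),
        hm1, hm2, hm3]
    ring
  calc ∑ x : ι → Fin k, (∏ v, p (x v)) * (∏ v, qd p Q (x v) ^ a v) * (Q (x u) (x w) * eP Q x E')
      = ∑ x : ι → Fin k, (p (x u) * Q (x u) (x w)) * G x :=
        Finset.sum_congr rfl fun x _ => lhs_eq x
    _ = ∑ x : ι → Fin k, (p (x u) * qd p Q (x w)) * G x := by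
        apply peel_sum hk u w hwu (fun y t => p y * Q y t) (fun y t => p y * qd p Q t) _ G hG
        intro t
        have hl : ∑ j, p j * Q j t = qd p Q t := by
          unfold qd
          exact Finset.sum_congr rfl fun j _ => by rw [hQ]
        rw [hl, ← Finset.sum_mul, hpsum, one_mul]
    _ = Wt p Q E' (Function.update a w (a w + 1)) := by
        unfold Wt
        exact (Finset.sum_congr rfl fun x _ => rhs_eq x).symm

lemma Wt_merge (hp : ∀ i, 0 ≤ p i) (hQnn : ∀ i j, 0 ≤ Q i j)
    (u v : ι) (huv : u ≠ v) (a : ι → ℕ) (E : List (ι × ι)) :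
    ((a u : ℝ) + (a v : ℝ)) * Wt p Q E a
      ≤ (a u : ℝ) * Wt p Q E (Function.update (Function.update a v 0) u (a u + a v))
        + (a v : ℝ) * Wt p Q E (Function.update (Function.update a u 0) v (a u + a v)) := by
  classical
  unfold Wt
  rw [Finset.mul_sum, Finset.mul_sum, Finset.mul_sum, ← Finset.sum_add_distrib]
  apply Finset.sum_le_sum
  intro x _
  have hvmem : v ∈ Finset.univ.erase u := Finset.mem_erase.mpr ⟨Ne.symm huv, Finset.mem_univ v⟩
  have humem : u ∈ Finset.univ.erase v := Finset.mem_erase.mpr ⟨huv, Finset.mem_univ u⟩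
  have h1 : (∏ v', qd p Q (x v') ^ a v')
      = qd p Q (x u) ^ a u * (qd p Q (x v) ^ a v
          * ∏ v' ∈ (Finset.univ.erase u).erase v, qd p Q (x v') ^ a v') := by
    rw [← Finset.mul_prod_erase Finset.univ _ (Finset.mem_univ u),
        ← Finset.mul_prod_erase _ _ hvmem]
  have h2 : (∏ v', qd p Q (x v') ^ (Function.update (Function.update a v 0) u (a u + a v)) v')
      = qd p Q (x u) ^ (a u + a v)
          * ∏ v' ∈ (Finset.univ.erase u).erase v, qd p Q (x v') ^ a v' := by
    rw [← Finset.mul_prod_erase Finset.univ _ (Finset.mem_univ u), Function.update_self]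
    congr 1
    rw [← Finset.mul_prod_erase _ _ hvmem, Function.update_of_ne (Ne.symm huv),
        Function.update_self, pow_zero, one_mul]
    exact Finset.prod_congr rfl fun w hw => by
      have hw1 := (Finset.mem_erase.mp hw).1
      have hw2 := (Finset.mem_erase.mp (Finset.mem_erase.mp hw).2).1
      rw [Function.update_of_ne hw2, Function.update_of_ne hw1]
  have h3 : (∏ v', qd p Q (x v') ^ (Function.update (Function.update a u 0) v (a u + a v)) v')
      = qd p Q (x v) ^ (a u + a v)
          * ∏ v' ∈ (Finset.univ.erase u).erase v, qd p Q (x v') ^ a v' := by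
    rw [← Finset.mul_prod_erase Finset.univ _ (Finset.mem_univ v), Function.update_self]
    congr 1
    rw [← Finset.mul_prod_erase _ _ humem, Function.update_of_ne huv,
        Function.update_self, pow_zero, one_mul]
    rw [erase_comm' Finset.univ v u]
    exact Finset.prod_congr rfl fun w hw => by
      have hw1 := (Finset.mem_erase.mp hw).1
      have hw2 := (Finset.mem_erase.mp (Finset.mem_erase.mp hw).2).1
      rw [Function.update_of_ne hw1, Function.update_of_ne hw2]
  rw [h1, h2, h3]
  have hA : 0 ≤ qd p Q (x u) := qd_nonneg p Q hp hQnn _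
  have hB : 0 ≤ qd p Q (x v) := qd_nonneg p Q hp hQnn _
  have hC0 : 0 ≤ (∏ v', p (x v'))
      * (∏ v' ∈ (Finset.univ.erase u).erase v, qd p Q (x v') ^ a v') * eP Q x E := by
    apply mul_nonneg
    apply mul_nonneg
    · exact Finset.prod_nonneg fun i _ => hp _
    · exact Finset.prod_nonneg fun i _ => pow_nonneg (qd_nonneg p Q hp hQnn _) _
    · exact eP_nonneg Q hQnn x E
  have key := mul_le_mul_of_nonneg_right (amgm2 (qd p Q (x u)) (qd p Q (x v)) hA hB (a u) (a v)) hC0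
  calc ((a u : ℝ) + a v) * ((∏ v', p (x v')) * (qd p Q (x u) ^ a u * (qd p Q (x v) ^ a v
          * ∏ v' ∈ (Finset.univ.erase u).erase v, qd p Q (x v') ^ a v')) * eP Q x E)
      = (((a u : ℝ) + a v) * (qd p Q (x u) ^ a u * qd p Q (x v) ^ a v))
          * ((∏ v', p (x v'))
            * (∏ v' ∈ (Finset.univ.erase u).erase v, qd p Q (x v') ^ a v') * eP Q x E) := by
        ring
    _ ≤ ((a u : ℝ) * qd p Q (x u) ^ (a u + a v) + (a v : ℝ) * qd p Q (x v) ^ (a u + a v))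
          * ((∏ v', p (x v'))
            * (∏ v' ∈ (Finset.univ.erase u).erase v, qd p Q (x v') ^ a v') * eP Q x E) := key
    _ = _ := by ring

theorem Wt_le (hk : 0 < k) (hp : ∀ i, 0 ≤ p i) (hpsum : ∑ i, p i = 1)
    (hQ : ∀ i j, Q i j = Q j i) (hQnn : ∀ i j, 0 ≤ Q i j) :
    ∀ (n m : ℕ) (s : Finset ι) (E : List (ι × ι)) (a : ι → ℕ),
      IsTree s E → s.card = n + 1 → (Finset.univ.filter fun v => a v ≠ 0).card ≤ m →
      (∀ v, v ∉ s → a v = 0) →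
      Wt p Q E a ≤ ∑ j, p j * qd p Q j ^ (n + ∑ v, a v) := by
  intro n
  induction n with
  | zero =>
    intro m s E a ht hcard hm hsupp
    have hE : E = [] := by
      have := ht.length_eq; rw [hcard] at this
      exact List.length_eq_zero_iff.mp (by omega)
    rcases Finset.card_eq_one.mp hcard with ⟨r, rfl⟩
    have hsum : ∑ v, a v = a r := by
      apply Finset.sum_eq_single r
      · intro v _ hv; exact hsupp v (by simp [hv])
      · intro h; exact absurd (Finset.mem_univ r) h
    subst hE
    unfold Wt
    have hterm : ∀ x : ι → Fin k, (∏ v, p (x v)) * (∏ v, qd p Q (x v) ^ a v) * eP Q x []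
        = ∏ v, (p (x v) * qd p Q (x v) ^ a v) := by
      intro x; rw [eP_nil, Finset.prod_mul_distrib]; ring
    rw [Finset.sum_congr rfl fun x _ => hterm x]
    rw [← Fintype.prod_sum (fun (v : ι) (j : Fin k) => p j * qd p Q j ^ a v)]
    rw [zero_add, hsum]
    have hfin : ∏ v : ι, (∑ j, p j * qd p Q j ^ a v) = ∑ j, p j * qd p Q j ^ a r := by
      apply Finset.prod_eq_single r
      · intro v _ hv
        have hz : a v = 0 := hsupp v (by simp [hv])
        simp [hz, hpsum]
      · intro h; exact absurd (Finset.mem_univ r) h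
    rw [hfin]
  | succ n ihn =>
    have peelc : ∀ (s : Finset ι) (E : List (ι × ι)) (a : ι → ℕ), IsTree s E →
        s.card = n + 2 → (Finset.univ.filter fun v => a v ≠ 0).card ≤ 1 →
        (∀ v, v ∉ s → a v = 0) →
        Wt p Q E a ≤ ∑ j, p j * qd p Q j ^ (n + 1 + ∑ v, a v) := by
      intro s E a ht hcard hm hsupp
      have hs2 : 2 ≤ s.card := by omega
      have cont : ∀ (u w : ι) (E' : List (ι × ι)), u ∈ s → w ∈ s → w ≠ u →
          IsTree (s.erase u) E' → (∀ e ∈ E', e.1 ≠ u ∧ e.2 ≠ u) →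
          (∀ x : ι → Fin k, eP Q x E = Q (x u) (x w) * eP Q x E') → a u = 0 →
          Wt p Q E a ≤ ∑ j, p j * qd p Q j ^ (n + 1 + ∑ v, a v) := by
        intro u w E' hus hws hwu ht' hE' hfac hau
        have step1 : Wt p Q E a = Wt p Q E' (Function.update a w (a w + 1)) := by
          unfold Wt
          rw [Finset.sum_congr rfl fun x _ => by rw [hfac x]]
          exact Wt_peel p Q hk hpsum hQ u w hwu E' hE' a hau
        rw [step1]
        have hcard' : (s.erase u).card = n + 1 := by
          rw [Finset.card_erase_of_mem hus]; omega
        have hsupp' : ∀ v, v ∉ s.erase u → Function.update a w (a w + 1) v = 0 := by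
          intro v hv
          by_cases hvw : v = w
          · subst hvw; exact absurd (Finset.mem_erase.mpr ⟨hwu, hws⟩) hv
          · rw [Function.update_of_ne hvw]
            by_cases hvu : v = u
            · subst hvu; exact hau
            · exact hsupp v fun hvs => hv (Finset.mem_erase.mpr ⟨hvu, hvs⟩)
        have hrec := ihn (Finset.univ.filter fun v => Function.update a w (a w + 1) v ≠ 0).card
          (s.erase u) E' _ ht' hcard' le_rfl hsupp'
        refine le_trans hrec (le_of_eq ?_)
        have hexp : n + ∑ v, Function.update a w (a w + 1) v = n + 1 + ∑ v, a v := by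
          have h1 : ∑ v, Function.update a w (a w + 1) v
              = (a w + 1) + ∑ v ∈ Finset.univ \ {w}, a v :=
            Finset.sum_update_of_mem (Finset.mem_univ w) a (a w + 1)
          have h2 : a w + ∑ v ∈ Finset.univ \ {w}, a v = ∑ v, a v :=
            sum_split _ a (Finset.mem_univ w)
          omega
        rw [hexp]
      by_cases hex : ∃ v, a v ≠ 0
      · obtain ⟨v₀, hv₀⟩ := hex
        obtain ⟨u, w, E', hus, huv₀, hws, hwu, ht', hE', hfac⟩ := ht.exists_peel Q hQ hs2 v₀
        have hau : a u = 0 := by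
          by_contra hau
          have : 1 < (Finset.univ.filter fun v => a v ≠ 0).card := by
            apply Finset.one_lt_card.mpr
            exact ⟨u, Finset.mem_filter.mpr ⟨Finset.mem_univ _, hau⟩,
              v₀, Finset.mem_filter.mpr ⟨Finset.mem_univ _, hv₀⟩, huv₀⟩
          omega
        exact cont u w E' hus hws hwu ht' hE' hfac hau
      · push_neg at hex
        obtain ⟨u, w, E', hus, _, hws, hwu, ht', hE', hfac⟩ :=
          ht.exists_peel Q hQ hs2 ht.nonempty.choose
        exact cont u w E' hus hws hwu ht' hE' hfac (hex u)
    intro m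
    induction m with
    | zero =>
      intro s E a ht hcard hm hsupp
      exact peelc s E a ht (by omega) (by omega) hsupp
    | succ m ihm =>
      intro s E a ht hcard hm hsupp
      by_cases hm1 : (Finset.univ.filter fun v => a v ≠ 0).card ≤ 1
      · exact peelc s E a ht (by omega) hm1 hsupp
      · push_neg at hm1
        obtain ⟨u, hu, v, hv, huv⟩ := Finset.one_lt_card.mp hm1
        have hau : a u ≠ 0 := (Finset.mem_filter.mp hu).2
        have hav : a v ≠ 0 := (Finset.mem_filter.mp hv).2
        have hus : u ∈ s := by by_contra h; exact hau (hsupp u h)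
        have hvs : v ∈ s := by by_contra h; exact hav (hsupp v h)
        have hvmem : v ∈ Finset.univ.erase u :=
          Finset.mem_erase.mpr ⟨Ne.symm huv, Finset.mem_univ v⟩
        have humem : u ∈ Finset.univ.erase v :=
          Finset.mem_erase.mpr ⟨huv, Finset.mem_univ u⟩
        set a₁ := Function.update (Function.update a v 0) u (a u + a v) with ha₁
        set a₂ := Function.update (Function.update a u 0) v (a u + a v) with ha₂
        have hsub1 : (Finset.univ.filter fun w' => a₁ w' ≠ 0)
            ⊆ (Finset.univ.filter fun w' => a w' ≠ 0).erase v := by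
          intro w' hw'
          have hb := (Finset.mem_filter.mp hw').2
          by_cases h1 : w' = v
          · subst h1
            exfalso; apply hb
            rw [ha₁, Function.update_of_ne (Ne.symm huv), Function.update_self]
          · refine Finset.mem_erase.mpr ⟨h1, Finset.mem_filter.mpr ⟨Finset.mem_univ _, ?_⟩⟩
            by_cases h2 : w' = u
            · subst h2; exact hau
            · rw [ha₁, Function.update_of_ne h2, Function.update_of_ne h1] at hb; exact hb
        have hsub2 : (Finset.univ.filter fun w' => a₂ w' ≠ 0)
            ⊆ (Finset.univ.filter fun w' => a w' ≠ 0).erase u := by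
          intro w' hw'
          have hb := (Finset.mem_filter.mp hw').2
          by_cases h1 : w' = u
          · subst h1
            exfalso; apply hb
            rw [ha₂, Function.update_of_ne huv, Function.update_self]
          · refine Finset.mem_erase.mpr ⟨h1, Finset.mem_filter.mpr ⟨Finset.mem_univ _, ?_⟩⟩
            by_cases h2 : w' = v
            · subst h2; exact hav
            · rw [ha₂, Function.update_of_ne h2, Function.update_of_ne h1] at hb; exact hb
        have hc1 : (Finset.univ.filter fun w' => a₁ w' ≠ 0).card ≤ m := by
          have hcc := Finset.card_le_card hsub1
          rw [Finset.card_erase_of_mem hv] at hcc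
          omega
        have hc2 : (Finset.univ.filter fun w' => a₂ w' ≠ 0).card ≤ m := by
          have hcc := Finset.card_le_card hsub2
          rw [Finset.card_erase_of_mem hu] at hcc
          omega
        have hsupp1 : ∀ w', w' ∉ s → a₁ w' = 0 := by
          intro w' hw'
          have h1 : w' ≠ u := fun h => hw' (h ▸ hus)
          have h2 : w' ≠ v := fun h => hw' (h ▸ hvs)
          rw [ha₁, Function.update_of_ne h1, Function.update_of_ne h2]
          exact hsupp w' hw'
        have hsupp2 : ∀ w', w' ∉ s → a₂ w' = 0 := by
          intro w' hw'
          have h1 : w' ≠ u := fun h => hw' (h ▸ hus)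
          have h2 : w' ≠ v := fun h => hw' (h ▸ hvs)
          rw [ha₂, Function.update_of_ne h2, Function.update_of_ne h1]
          exact hsupp w' hw'
        have hvmem' : v ∈ Finset.univ \ {u} := by
          rw [← Finset.erase_eq]; exact hvmem
        have humem' : u ∈ Finset.univ \ {v} := by
          rw [← Finset.erase_eq]; exact humem
        have hsum1 : ∑ w', a₁ w' = ∑ w', a w' := by
          have e1 : ∑ w', a₁ w' = (a u + a v) + ∑ w' ∈ Finset.univ \ {u},
              Function.update a v 0 w' := by
            rw [ha₁]
            exact Finset.sum_update_of_mem (Finset.mem_univ u) _ _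
          have e2 : ∑ w' ∈ Finset.univ \ {u}, Function.update a v 0 w'
              = 0 + ∑ w' ∈ (Finset.univ \ {u}) \ {v}, a w' :=
            Finset.sum_update_of_mem hvmem' _ _
          have e3 : a u + ∑ w' ∈ Finset.univ \ {u}, a w' = ∑ w', a w' :=
            sum_split _ a (Finset.mem_univ u)
          have e4 : a v + ∑ w' ∈ (Finset.univ \ {u}) \ {v}, a w'
              = ∑ w' ∈ Finset.univ \ {u}, a w' := sum_split _ a hvmem'
          omega
        have hsum2 : ∑ w', a₂ w' = ∑ w', a w' := by
          have e1 : ∑ w', a₂ w' = (a u + a v) + ∑ w' ∈ Finset.univ \ {v},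
              Function.update a u 0 w' := by
            rw [ha₂]
            exact Finset.sum_update_of_mem (Finset.mem_univ v) _ _
          have e2 : ∑ w' ∈ Finset.univ \ {v}, Function.update a u 0 w'
              = 0 + ∑ w' ∈ (Finset.univ \ {v}) \ {u}, a w' :=
            Finset.sum_update_of_mem humem' _ _
          have e3 : a v + ∑ w' ∈ Finset.univ \ {v}, a w' = ∑ w', a w' :=
            sum_split _ a (Finset.mem_univ v)
          have e4 : a u + ∑ w' ∈ (Finset.univ \ {v}) \ {u}, a w'
              = ∑ w' ∈ Finset.univ \ {v}, a w' := sum_split _ a humem'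
          omega
        have h1 := ihm s E a₁ ht hcard hc1 hsupp1
        have h2 := ihm s E a₂ ht hcard hc2 hsupp2
        rw [hsum1] at h1
        rw [hsum2] at h2
        have hmer := Wt_merge p Q hp hQnn u v huv a E
        have hposn : 0 < a u + a v := by omega
        have hpos : (0:ℝ) < (a u : ℝ) + (a v : ℝ) := by
          exact_mod_cast hposn
        have b1 : (a u : ℝ) * Wt p Q E a₁
            ≤ (a u : ℝ) * (∑ j, p j * qd p Q j ^ (n + 1 + ∑ v', a v')) :=
          mul_le_mul_of_nonneg_left h1 (Nat.cast_nonneg _)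
        have b2 : (a v : ℝ) * Wt p Q E a₂
            ≤ (a v : ℝ) * (∑ j, p j * qd p Q j ^ (n + 1 + ∑ v', a v')) :=
          mul_le_mul_of_nonneg_left h2 (Nat.cast_nonneg _)
        have step : ((a u:ℝ) + a v) * Wt p Q E a
            ≤ ((a u:ℝ) + a v) * (∑ j, p j * qd p Q j ^ (n + 1 + ∑ v', a v')) := by
          refine le_trans hmer ?_
          linarith
        exact le_of_mul_le_mul_left step hpos

lemma prod_le_prod_sub {α : Type} [DecidableEq α] (T S : Finset α) (h : T ⊆ S) (f : α → ℝ)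
    (h0 : ∀ z ∈ S, 0 ≤ f z) (h1 : ∀ z ∈ S, f z ≤ 1) : ∏ z ∈ S, f z ≤ ∏ z ∈ T, f z := by
  rw [← Finset.prod_sdiff h]
  have hT0 : 0 ≤ ∏ z ∈ T, f z := Finset.prod_nonneg fun z hz => h0 z (h hz)
  have hle : ∏ z ∈ S \ T, f z ≤ 1 :=
    Finset.prod_le_one (fun z hz => h0 z (Finset.mem_sdiff.mp hz).1)
      (fun z hz => h1 z (Finset.mem_sdiff.mp hz).1)
  exact mul_le_of_le_one_left hT0 hle

end SBMAux

namespace SBMAux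

variable {k : ℕ} (p : Fin k → ℝ) (Q : Fin k → Fin k → ℝ)
variable {V : Type} [Fintype V] [DecidableEq V] (H : SimpleGraph V) [DecidableRel H.Adj]

lemma cross_of_walk (s : Finset V) :
    ∀ {A B : V}, H.Walk A B → A ∈ s → B ∉ s → ∃ a ∈ s, ∃ b, b ∉ s ∧ H.Adj a b := by
  intro A B wlk
  induction wlk with
  | nil => intro h1 h2; exact absurd h1 h2
  | @cons a c B' h pw ih =>
    intro hA hB
    by_cases hc : c ∈ s
    · exact ih hc hB
    · exact ⟨a, hA, c, hc, h⟩

lemma exists_spanning (hconn : H.Connected) :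
    ∃ E : List (V × V), IsTree (Finset.univ : Finset V) E ∧ ∀ e ∈ E, H.Adj e.1 e.2 := by
  have hNV : Nonempty V := hconn.nonempty
  have grow : ∀ j : ℕ, ∃ (s : Finset V) (E : List (V × V)),
      IsTree s E ∧ (∀ e ∈ E, H.Adj e.1 e.2) ∧ (s.card = j + 1 ∨ s = Finset.univ) := by
    intro j
    induction j with
    | zero =>
      obtain ⟨v⟩ := hNV
      exact ⟨{v}, [], IsTree.single v, by simp, Or.inl (Finset.card_singleton v)⟩
    | succ j ih =>
      obtain ⟨s, E, ht, hadj, hc⟩ := ih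
      rcases hc with hc | hc
      · by_cases huniv : s = Finset.univ
        · exact ⟨s, E, ht, hadj, Or.inr huniv⟩
        · have hb : ∃ b, b ∉ s := by
            by_contra hall
            push_neg at hall
            exact huniv (Finset.eq_univ_iff_forall.mpr hall)
          obtain ⟨b, hb⟩ := hb
          obtain ⟨a₀, ha₀⟩ := ht.nonempty
          obtain ⟨wlk⟩ := hconn.preconnected a₀ b
          obtain ⟨a, ha, b', hb', hadj'⟩ := cross_of_walk H s wlk ha₀ hb
          refine ⟨insert b' s, (b', a) :: E, IsTree.hang s E b' a ha hb' ht, ?_, Or.inl ?_⟩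
          · intro e he
            rcases List.mem_cons.mp he with rfl | he
            · exact hadj'.symm
            · exact hadj e he
          · rw [Finset.card_insert_of_notMem hb', hc]
      · exact ⟨s, E, ht, hadj, Or.inr hc⟩
  obtain ⟨s, E, ht, hadj, hc⟩ := grow (Fintype.card V - 1)
  have hsu : s = Finset.univ := by
    rcases hc with hc | hc
    · apply Finset.eq_univ_of_card
      rw [hc]
      have : 1 ≤ Fintype.card V := Fintype.card_pos
      omega
    · exact hc
  exact ⟨E, hsu ▸ ht, hadj⟩

lemma lift_nonneg (hQ : ∀ i j, Q i j = Q j i) (hQnn : ∀ i j, 0 ≤ Q i j)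
    (x : V → Fin k) (z : Sym2 V) :
    0 ≤ Sym2.lift ⟨fun u v => Q (x u) (x v), fun u v => hQ (x u) (x v)⟩ z := by
  induction z using Sym2.ind with
  | _ a b => rw [Sym2.lift_mk]; exact hQnn _ _

lemma lift_le_one (hQ : ∀ i j, Q i j = Q j i) (hQbd : ∀ i j, |Q i j| ≤ 1)
    (x : V → Fin k) (z : Sym2 V) :
    Sym2.lift ⟨fun u v => Q (x u) (x v), fun u v => hQ (x u) (x v)⟩ z ≤ 1 := by
  induction z using Sym2.ind with
  | _ a b => rw [Sym2.lift_mk]; exact (abs_le.mp (hQbd _ _)).2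

lemma Phi_nonneg (hp : ∀ i, 0 ≤ p i) (hQ : ∀ i j, Q i j = Q j i)
    (hQnn : ∀ i j, 0 ≤ Q i j) : 0 ≤ Phi p Q hQ H := by
  apply Finset.sum_nonneg
  intro x _
  apply mul_nonneg
  · exact Finset.prod_nonneg fun v _ => hp _
  · exact Finset.prod_nonneg fun z _ => lift_nonneg Q hQ hQnn x z

lemma Phi_le_Wt (hp : ∀ i, 0 ≤ p i) (hQ : ∀ i j, Q i j = Q j i)
    (hQbd : ∀ i j, |Q i j| ≤ 1) (hQnn : ∀ i j, 0 ≤ Q i j)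
    (E : List (V × V)) (ht : IsTree (Finset.univ : Finset V) E)
    (hadj : ∀ e ∈ E, H.Adj e.1 e.2) :
    Phi p Q hQ H ≤ Wt p Q E (fun _ => 0) := by
  unfold Phi Wt
  apply Finset.sum_le_sum
  intro x _
  simp only [pow_zero, Finset.prod_const_one, mul_one]
  apply mul_le_mul_of_nonneg_left _ (Finset.prod_nonneg fun v _ => hp _)
  have key : eP Q x E = ∏ z ∈ (E.map fun e => Sym2.mk e.1 e.2).toFinset,
      Sym2.lift ⟨fun u v => Q (x u) (x v), fun u v => hQ (x u) (x v)⟩ z := by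
    rw [List.prod_toFinset _ ht.nodup_sym, List.map_map]
    unfold eP
    congr 1
  rw [key]
  apply prod_le_prod_sub
  · intro z hz
    rw [List.mem_toFinset] at hz
    obtain ⟨⟨e1, e2⟩, he, rfl⟩ := List.mem_map.mp hz
    rw [SimpleGraph.mem_edgeFinset, SimpleGraph.mem_edgeSet]
    exact hadj _ he
  · intro z _; exact lift_nonneg Q hQ hQnn x z
  · intro z _; exact lift_le_one Q hQ hQbd x z

lemma star_edge (t : ℕ) : (StarGraph t).edgeFinset
    = Finset.univ.image (fun j : Fin t => s(0, j.succ)) := by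
  ext z
  induction z using Sym2.ind with
  | _ a b =>
    simp only [SimpleGraph.mem_edgeFinset, Finset.mem_image, Finset.mem_univ, true_and]
    rw [SimpleGraph.mem_edgeSet]
    constructor
    · intro hadj'
      obtain ⟨hne, h0⟩ := (hadj' : a ≠ b ∧ (a = 0 ∨ b = 0))
      rcases h0 with rfl | rfl
      · obtain ⟨j, hj⟩ := Fin.exists_succ_eq.mpr (Ne.symm hne)
        exact ⟨j, by rw [hj]⟩
      · obtain ⟨j, hj⟩ := Fin.exists_succ_eq.mpr hne
        exact ⟨j, by rw [hj]; exact Sym2.eq_swap⟩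
    · rintro ⟨j, hj⟩
      rcases (Sym2.mk_eq_mk_iff (p := (0, j.succ)) (q := (a, b))).mp hj with h | h
      · have ha : (0 : Fin (t+1)) = a := congrArg Prod.fst h
        have hb : j.succ = b := congrArg Prod.snd h
        rw [← ha, ← hb]
        exact ⟨(Fin.succ_ne_zero j).symm, Or.inl rfl⟩
      · have ha : (0 : Fin (t+1)) = b := congrArg Prod.fst h
        have hb : j.succ = a := congrArg Prod.snd h
        rw [← ha, ← hb]
        exact ⟨Fin.succ_ne_zero j, Or.inr rfl⟩

lemma Phi_star (hpsum : ∑ i, p i = 1) (hQ : ∀ i j, Q i j = Q j i) (t : ℕ) :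
    Phi p Q hQ (StarGraph t) = ∑ i, p i * qd p Q i ^ t := by
  unfold Phi
  have hinj : ∀ j1 ∈ (Finset.univ : Finset (Fin t)), ∀ j2 ∈ Finset.univ,
      s((0 : Fin (t+1)), j1.succ) = s((0 : Fin (t+1)), j2.succ) → j1 = j2 := by
    intro j1 _ j2 _ hj
    rcases (Sym2.mk_eq_mk_iff (p := ((0 : Fin (t+1)), j1.succ)) (q := ((0 : Fin (t+1)), j2.succ))).mp hj with h | h
    · exact Fin.succ_injective t (congrArg Prod.snd h)
    · exact absurd (congrArg Prod.fst h) (Fin.succ_ne_zero j2).symm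
  have hprod : ∀ x : Fin (t+1) → Fin k,
      (∏ e ∈ (StarGraph t).edgeFinset,
        Sym2.lift ⟨fun u v => Q (x u) (x v), fun u v => hQ (x u) (x v)⟩ e)
      = ∏ j : Fin t, Q (x 0) (x j.succ) := by
    intro x
    rw [star_edge, Finset.prod_image hinj]
    exact Finset.prod_congr rfl fun j _ => by rw [Sym2.lift_mk]
  rw [Finset.sum_congr rfl fun x _ => by rw [hprod x]]
  rw [← Equiv.sum_comp (Fin.consEquiv (fun _ : Fin (t+1) => Fin k))
    (fun x => (∏ v, p (x v)) * ∏ j : Fin t, Q (x 0) (x j.succ))]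
  rw [Fintype.sum_prod_type]
  apply Finset.sum_congr rfl
  intro i _
  have hstep : ∀ y : Fin t → Fin k,
      (fun x : Fin (t+1) → Fin k => (∏ v, p (x v)) * ∏ j : Fin t, Q (x 0) (x j.succ))
        ((Fin.consEquiv (fun _ : Fin (t+1) => Fin k)) (i, y))
      = p i * ∏ j : Fin t, (p (y j) * Q i (y j)) := by
    intro y
    simp only [Fin.consEquiv_apply]
    rw [Fin.prod_univ_succ]
    simp only [Fin.cons_zero, Fin.cons_succ]
    rw [Finset.prod_mul_distrib]
    ring
  refine (Finset.sum_congr rfl fun y _ => hstep y).trans ?_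
  rw [← Finset.mul_sum]
  congr 1
  rw [← Fintype.prod_sum (fun (_ : Fin t) (c : Fin k) => p c * Q i c),
      Finset.prod_const, Finset.card_univ, Fintype.card_fin]
  rfl

end SBMAux

open SBMAux in
/-- in non-negative SBMs, stars maximize the partition value among
connected graphs with at most D edges. -/
theorem stmt3 {k : ℕ} (hk : 1 ≤ k) (p : Fin k → ℝ) (Q : Fin k → Fin k → ℝ)
    (hp : ∀ i, 0 ≤ p i) (hpsum : ∑ i, p i = 1)
    (hQ : ∀ i j, Q i j = Q j i) (hQbd : ∀ i j, |Q i j| ≤ 1)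
    (hQnn : ∀ i j, 0 ≤ Q i j)
    (D : ℕ) (hD : 1 ≤ D)
    {V : Type} [Fintype V] [DecidableEq V] (H : SimpleGraph V) [DecidableRel H.Adj]
    (hconn : H.Connected) (hE1 : 1 ≤ H.edgeFinset.card) (hED : H.edgeFinset.card ≤ D) :
    Psi p Q hQ H ≤
      (Finset.Icc 1 D).sup' (Finset.nonempty_Icc.mpr hD)
        (fun t => Psi p Q hQ (StarGraph t)) := by
  classical
  -- the graph has at least two vertices
  have hNT : 2 ≤ Fintype.card V := by
    obtain ⟨z, hz⟩ := Finset.card_pos.mp hE1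
    induction z using Sym2.ind with
    | _ a b =>
      rw [SimpleGraph.mem_edgeFinset, SimpleGraph.mem_edgeSet] at hz
      exact Fintype.one_lt_card_iff_nontrivial.mpr ⟨a, b, hz.ne⟩
  obtain ⟨E, htree, hadj⟩ := exists_spanning H hconn
  have hlen : E.length + 1 = Fintype.card V := by
    rw [htree.length_eq, Finset.card_univ]
  -- edge count bounds
  have hTsub : (E.map fun e => Sym2.mk e.1 e.2).toFinset ⊆ H.edgeFinset := by
    intro z hz
    rw [List.mem_toFinset] at hz
    obtain ⟨⟨e1, e2⟩, he, rfl⟩ := List.mem_map.mp hz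
    rw [SimpleGraph.mem_edgeFinset, SimpleGraph.mem_edgeSet]
    exact hadj _ he
  have hcardT : (E.map fun e => Sym2.mk e.1 e.2).toFinset.card = E.length := by
    rw [List.toFinset_card_of_nodup htree.nodup_sym]
    exact List.length_map _
  have hNE : E.length ≤ H.edgeFinset.card := by
    rw [← hcardT]
    exact Finset.card_le_card hTsub
  have hmem : E.length ∈ Finset.Icc 1 D := by
    rw [Finset.mem_Icc]
    constructor
    · omega
    · omega
  -- main bound
  have h0 := Wt_le p Q (by omega) hp hpsum hQ hQnn E.length 0 Finset.univ E (fun _ => 0)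
    htree (by rw [Finset.card_univ, ← hlen]) (by simp) (fun _ _ => rfl)
  have hexp : E.length + ∑ _v : V, (0:ℕ) = E.length := by simp
  rw [hexp] at h0
  have hphi_le : Phi p Q hQ H ≤ ∑ j, p j * qd p Q j ^ E.length :=
    le_trans (Phi_le_Wt p Q H hp hQ hQbd hQnn E htree hadj) h0
  have hphi0 : 0 ≤ Phi p Q hQ H := Phi_nonneg p Q H hp hQ hQnn
  have hsum0 : 0 ≤ ∑ j, p j * qd p Q j ^ E.length :=
    Finset.sum_nonneg fun j _ => mul_nonneg (hp j) (pow_nonneg (qd_nonneg p Q hp hQnn j) _)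
  have hstar : Phi p Q hQ (StarGraph E.length) = ∑ j, p j * qd p Q j ^ E.length :=
    Phi_star p Q hpsum hQ E.length
  have hpsi : Psi p Q hQ H ≤ Psi p Q hQ (StarGraph E.length) := by
    unfold Psi
    rw [abs_of_nonneg hphi0, hstar, abs_of_nonneg hsum0, Fintype.card_fin, hlen]
    exact Real.rpow_le_rpow hphi0 hphi_le (by positivity)
  exact le_trans hpsi (Finset.le_sup' (fun t => Psi p Q hQ (StarGraph t)) hmem)
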